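/- Let n ≥ 1, let a_0, …, a_n be real numbers, let a ∈ [−1,1], r > 0 and M > 0. Let u_k(a) be the Clenshaw sequence of p at a and suppose |u_k(a)| ≤ M for 1 ≤ k ≤ n. Let ε_0, …, ε_{n−1} be real numbers with 0 ≤ ε_k < M·r for all k. Define e_n = 0, e_k = e_{k+1} + 2r·|u_{k+1}(a)| + ε_k for n−1 ≥ k ≥ 1, and e_0 = e_1 + r·|u_1(a)| + ε_0. Then e_0 < 3Mnr. -/
import Mathlib


open Finset

/-- Radius bound for the ball Clenshaw algorithm with backward error analysis:
if `|uₖ(a)| ≤ M` and each rounding error bound satisfies `0 ≤ εₖ < Mr`,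
then the final radius satisfies `e₀ < 3Mnr`. -/
theorem ball_clenshaw_backward_radius (n : ℕ) (hn : 1 ≤ n) (a : ℕ → ℝ)
    (c : ℝ) (hc : c ∈ Set.Icc (-1 : ℝ) 1) (r : ℝ) (hr : 0 < r)
    (M : ℝ) (hM : 0 < M)
    (u : ℕ → ℝ) (hun1 : u (n + 1) = 0) (hun : u n = a n)
    (hurec : ∀ k, 1 ≤ k → k ≤ n - 1 → u k = 2 * c * u (k + 1) - u (k + 2) + a k)
    (hMu : ∀ k, 1 ≤ k → k ≤ n → |u k| ≤ M)
    (ε : ℕ → ℝ) (hε : ∀ k, k ≤ n - 1 → 0 ≤ ε k ∧ ε k < M * r)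
    (e : ℕ → ℝ) (hen : e n = 0)
    (herec : ∀ k, 1 ≤ k → k ≤ n - 1 → e k = e (k + 1) + 2 * r * |u (k + 1)| + ε k)
    (he0 : e 0 = e 1 + r * |u 1| + ε 0) :
    e 0 < 3 * M * (n : ℝ) * r := by
  have hMr : 0 < M * r := mul_pos hM hr
  have key : ∀ j, j ≤ n - 1 → e (n - j) ≤ 3 * M * r * j := by
    intro j
    induction j with
    | zero => intro _; simp [hen]
    | succ j ih =>
      intro hj
      have hj' : j ≤ n - 1 := Nat.le_of_succ_le hj
      have hk1 : 1 ≤ n - (j + 1) := by omega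
      have hk2 : n - (j + 1) ≤ n - 1 := by omega
      have hs : n - (j + 1) + 1 = n - j := by omega
      have hrec := herec (n - (j + 1)) hk1 hk2
      rw [hs] at hrec
      have hu : |u (n - j)| ≤ M := hMu _ (by omega) (by omega)
      have hεb := (hε (n - (j + 1)) hk2).2
      have := ih hj'
      rw [hrec]
      push_cast
      nlinarith [hr.le, hM.le]
  have h1 : e 1 ≤ 3 * M * r * (n - 1 : ℕ) := by
    have := key (n - 1) le_rfl
    rwa [show n - (n - 1) = 1 by omega] at this
  have hu1 : |u 1| ≤ M := hMu 1 le_rfl hn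
  have hε0 := (hε 0 (Nat.zero_le _)).2
  have hcast : ((n - 1 : ℕ) : ℝ) = (n : ℝ) - 1 := by
    have : (1 : ℕ) ≤ n := hn
    push_cast [this]; ring
  rw [he0]
  rw [hcast] at h1
  nlinarith [hr.le, hM.le]
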